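/- With the notation of the adjoint construction, if the adjoint image [ω_{ξ,W,B}] vanishes, then one can choose liftings s̃_i ∈ H⁰(X, E) of η_i such that Λ^{n+1}(s̃_1 ∧ … ∧ s̃_{n+1}) = 0 in H⁰(X, det E); explicitly, if ω = Σ a_i λⁿ(η_1 ∧ … ∧ η̂_i ∧ … ∧ η_{n+1}), setting s̃_i = s_i + (−1)^{n−i} a_i · dε works. -/

import Mathlib

open Module

/-- If the adjoint image vanishes, i.e. the adjoint form satisfies
`ω = Λ(s) = Σ_i a_i λⁿ(η_1 ∧ … ∧ η̂_i ∧ … ∧ η_{n+1})`, then the modified liftings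
`s̃_i = s_i + (−1)^{n−i} a_i · dε` satisfy `Λ^{n+1}(s̃_1 ∧ … ∧ s̃_{n+1}) = 0`
(0-based indices, so the sign is `(-1)^(i+n+1)`). -/
theorem adjoint_vanishing_liftings
    {K HE HF V : Type*} [Field K]
    [AddCommGroup HE] [Module K HE] [AddCommGroup HF] [Module K HF]
    [AddCommGroup V] [Module K V] (n : ℕ)
    (ρ : HE →ₗ[K] HF) (dε : HE)
    (hker : LinearMap.ker ρ = Submodule.span K {dε})
    (lam : AlternatingMap K HF V (Fin n))
    (Lam : AlternatingMap K HE V (Fin (n + 1)))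
    (hcompat : ∀ (x : Fin (n + 1) → HE) (i : Fin (n + 1)), x i = dε →
      Lam x = ((-1 : K) ^ ((i : ℕ) + n)) • lam (fun j => ρ (x (i.succAbove j))))
    (η : Fin (n + 1) → HF) (hη : LinearIndependent K η)
    (s : Fin (n + 1) → HE) (hs : ∀ i, ρ (s i) = η i)
    (a : Fin (n + 1) → K)
    (hω : Lam s = ∑ i, a i • lam (fun j => η (i.succAbove j))) :
    Lam (fun i => s i + ((-1 : K) ^ ((i : ℕ) + n + 1) * a i) • dε) = 0 := by
  classical
  set c : Fin (n + 1) → K := fun i => (-1 : K) ^ ((i : ℕ) + n + 1) * a i with hc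
  set m : Fin (n + 1) → HE := fun i => c i • dε with hm
  have key : Lam (fun i => s i + c i • dε) = ∑ t : Finset (Fin (n + 1)), Lam (t.piecewise m s) := by
    have := Lam.toMultilinearMap.map_add_univ m s
    rw [show (fun i => s i + c i • dε) = m + s from funext fun i => add_comm _ _]
    exact this
  -- terms with card ≥ 2 vanish
  have hzero : ∀ t : Finset (Fin (n + 1)), 2 ≤ t.card → Lam (t.piecewise m s) = 0 := by
    intro t ht
    obtain ⟨i, hi, j, hj, hij⟩ := Finset.one_lt_card.mp ht
    set v := t.piecewise m s with hv
    have hvi : v i = c i • dε := by simp [hv, Finset.piecewise_eq_of_mem _ _ _ hi, hm]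
    have hvj : v j = c j • dε := by simp [hv, Finset.piecewise_eq_of_mem _ _ _ hj, hm]
    by_cases hci : c i = 0
    · have : v = Function.update v i 0 := by
        funext k
        rcases eq_or_ne k i with rfl | hk
        · simp [hvi, hci]
        · simp [Function.update_of_ne hk]
      rw [this]
      exact Lam.toMultilinearMap.map_update_zero v i
    · have hvj' : v j = (c j * (c i)⁻¹) • v i := by
        rw [hvi, hvj, smul_smul]
        congr 1
        field_simp
      have : v = Function.update v j ((c j * (c i)⁻¹) • v i) := by
        funext k
        rcases eq_or_ne k j with rfl | hk
        · simp [hvj']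
        · simp [Function.update_of_ne hk]
      rw [this, Lam.map_update_smul]
      have hz : Lam (Function.update v j (v i)) = 0 :=
        Lam.map_eq_zero_of_eq _ (by
          simp [Function.update_of_ne hij, Function.update_self]) hij
      rw [hz, smul_zero]
  -- the remaining sum
  have hsum : ∑ t : Finset (Fin (n + 1)), Lam (t.piecewise m s)
      = Lam s + ∑ i, Lam (Function.update s i (c i • dε)) := by
    rw [← Finset.sum_subset (Finset.subset_univ
        (insert (∅ : Finset (Fin (n + 1))) (Finset.univ.image fun i => {i})))]
    · rw [Finset.sum_insert (by simp)]
      rw [Finset.sum_image (by intro x _ y _ h; simpa using h)]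
      simp [Finset.piecewise_empty, Finset.piecewise_singleton, hm]
    · intro t _ hnot
      apply hzero
      simp only [Finset.mem_insert, Finset.mem_image, Finset.mem_univ, true_and, not_or,
        not_exists] at hnot
      rcases hnot with ⟨h0, h1⟩
      by_contra hlt
      push_neg at hlt
      interval_cases h : t.card
      · exact h0 (Finset.card_eq_zero.mp h)
      · obtain ⟨i, rfl⟩ := Finset.card_eq_one.mp h
        exact h1 i rfl
  -- compute each correction term
  have hterm : ∀ i : Fin (n + 1), Lam (Function.update s i (c i • dε))
      = -(a i • lam (fun j => η (i.succAbove j))) := by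
    intro i
    rw [Lam.map_update_smul]
    have hx : (Function.update s i dε) i = dε := Function.update_self i dε s
    rw [hcompat _ i hx]
    have hρ : (fun j => ρ ((Function.update s i dε) (i.succAbove j))) =
        fun j => η (i.succAbove j) := by
      funext j
      rw [Function.update_of_ne (Fin.succAbove_ne i j), hs]
    rw [hρ, smul_smul, hc]
    have hsign : (-1 : K) ^ ((i : ℕ) + n + 1) * a i * (-1 : K) ^ ((i : ℕ) + n) = -(a i) := by
      rw [mul_comm _ (a i), mul_assoc, ← pow_add]
      have : ((i : ℕ) + n + 1) + ((i : ℕ) + n) = 2 * ((i : ℕ) + n) + 1 := by ring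
      rw [this, pow_succ, pow_mul]
      simp [mul_comm]
    rw [hsign, neg_smul]
  show Lam (fun i => s i + c i • dε) = 0
  rw [key, hsum]
  simp only [hterm]
  rw [Finset.sum_neg_distrib, hω]
  simp
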